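/- Let A be a reduced ℕ-graded ring generated over A₀ by homogeneous elements x₁,…,xₙ of positive degrees ω₁,…,ωₙ, let w = lcm(ω₁,…,ωₙ), let k be a positive integer, and let I = A_{≥kw}. If I^p = A_{≥pkw} for every integer p with 1 ≤ p ≤ (n−2)/k + 1, then I is a normal ideal. In particular, if k ≥ n−1 then I is a normal ideal. -/

import Mathlib

open Finset

/-- `x` is integral over the ideal `I`: it satisfies an equation
`x^m + a₁ x^{m-1} + ⋯ + a_m = 0` with `a_k ∈ I^k`. -/
def IsIntegralOverIdeal {A : Type*} [CommRing A] (I : Ideal A) (x : A) : Prop :=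
  ∃ m : ℕ, 0 < m ∧ ∃ a : ℕ → A,
    (∀ k ∈ Finset.Icc 1 m, a k ∈ I ^ k) ∧
    x ^ m + ∑ k ∈ Finset.Icc 1 m, a k * x ^ (m - k) = 0

/-- An ideal is integrally closed if it contains every element integral over it. -/
def IsIntegrallyClosedIdeal {A : Type*} [CommRing A] (I : Ideal A) : Prop :=
  ∀ x : A, IsIntegralOverIdeal I x → x ∈ I

/-- An ideal is normal if all its positive powers are integrally closed. -/
def IsNormalIdeal {A : Type*} [CommRing A] (I : Ideal A) : Prop :=
  ∀ m : ℕ, 0 < m → IsIntegrallyClosedIdeal (I ^ m)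

/-- For an ℕ-graded ring `A` (graded by `𝒜`), the homogeneous ideal
`A_{≥ m} = ⊕_{ℓ ≥ m} A_ℓ`, realized as the ideal generated by all homogeneous
elements of degree at least `m`. -/
def idealGe {A : Type*} [CommRing A] (𝒜 : ℕ → AddSubgroup A) (m : ℕ) : Ideal A :=
  Ideal.span {a : A | ∃ ℓ : ℕ, m ≤ ℓ ∧ a ∈ 𝒜 ℓ}

open DirectSum Pointwise

set_option linter.unusedSectionVars false
section basics
variable {A : Type*} [CommRing A] (𝒜 : ℕ → AddSubgroup A) [GradedRing 𝒜]

lemma mem_idealGe_of_mem {a : A} {ℓ m : ℕ} (hm : m ≤ ℓ) (ha : a ∈ 𝒜 ℓ) :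
    a ∈ idealGe 𝒜 m :=
  Ideal.subset_span ⟨ℓ, hm, ha⟩

lemma idealGe_anti {m m' : ℕ} (h : m ≤ m') : idealGe 𝒜 m' ≤ idealGe 𝒜 m :=
  Ideal.span_mono (fun _ ⟨ℓ, hℓ, ha⟩ => ⟨ℓ, le_trans h hℓ, ha⟩)

lemma mem_idealGe_of_decompose {a : A} {m : ℕ}
    (h : ∀ d, d < m → (DirectSum.decompose 𝒜 a d : A) = 0) : a ∈ idealGe 𝒜 m := by
  classical
  rw [← DirectSum.sum_support_decompose 𝒜 a]
  refine Ideal.sum_mem _ (fun d _ => ?_)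
  by_cases hd : d < m
  · rw [h d hd]; exact zero_mem _
  · exact mem_idealGe_of_mem 𝒜 (le_of_not_gt hd) (SetLike.coe_mem _)

lemma decompose_eq_zero_of_mem_idealGe {a : A} {m : ℕ} (ha : a ∈ idealGe 𝒜 m) :
    ∀ d, d < m → (DirectSum.decompose 𝒜 a d : A) = 0 := by
  classical
  refine Submodule.span_induction ?_ ?_ ?_ ?_ ha
  · rintro z ⟨ℓ, hℓ, hz⟩ d hd
    exact DirectSum.decompose_of_mem_ne 𝒜 hz (by omega)
  · intro d hd; simp
  · intro y z _ _ hy hz d hd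
    rw [DirectSum.decompose_add, DirectSum.add_apply]
    push_cast
    rw [hy d hd, hz d hd, add_zero]
  · intro r z _ hz d hd
    -- r • z = r * z
    have key : ∀ r : A, (DirectSum.decompose 𝒜 (r * z) d : A) = 0 := by
      intro r
      induction r using DirectSum.Decomposition.inductionOn 𝒜 with
      | zero => simp
      | add a b ha hb =>
        rw [add_mul, DirectSum.decompose_add, DirectSum.add_apply]
        push_cast
        rw [ha, hb, add_zero]
      | homogeneous hr =>
        rename_i i
        rw [← DirectSum.sum_support_decompose 𝒜 z, Finset.mul_sum,
          DirectSum.decompose_sum]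
        rw [DFinsupp.finset_sum_apply]
        push_cast
        refine Finset.sum_eq_zero (fun j hj => ?_)
        by_cases hjm : j < m
        · rw [hz j hjm, mul_zero]; simp
        · have : (hr : A) * (DirectSum.decompose 𝒜 z j : A) ∈ 𝒜 (i + j) :=
            SetLike.mul_mem_graded hr.2 (SetLike.coe_mem _)
          rw [DirectSum.decompose_of_mem_ne 𝒜 this (show i + j ≠ d by omega)]
    exact key r

end basics

section chunk2
variable {A : Type*} [CommRing A] (𝒜 : ℕ → AddSubgroup A) [GradedRing 𝒜]

lemma idealGe_top : idealGe 𝒜 0 = ⊤ :=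
  eq_top_iff.2 (fun a _ => mem_idealGe_of_decompose 𝒜 (fun d hd => by omega))

lemma idealGe_mul_le (a b : ℕ) : idealGe 𝒜 a * idealGe 𝒜 b ≤ idealGe 𝒜 (a + b) := by
  rw [idealGe, idealGe, Ideal.span_mul_span]
  rw [Ideal.span_le]
  intro z hz
  rw [Set.mem_mul] at hz
  obtain ⟨s, ⟨ℓ₁, hℓ₁, hs⟩, t, ⟨ℓ₂, hℓ₂, ht⟩, rfl⟩ := hz
  exact mem_idealGe_of_mem 𝒜 (add_le_add hℓ₁ hℓ₂) (SetLike.mul_mem_graded hs ht)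

lemma idealGe_pow_le (m : ℕ) : ∀ j, (idealGe 𝒜 m) ^ j ≤ idealGe 𝒜 (j * m)
  | 0 => by rw [pow_zero, Ideal.one_eq_top, zero_mul, idealGe_top 𝒜]
  | (j+1) => by
    rw [pow_succ]
    calc (idealGe 𝒜 m) ^ j * idealGe 𝒜 m ≤ idealGe 𝒜 (j * m) * idealGe 𝒜 m :=
          Ideal.mul_mono_left (idealGe_pow_le m j)
      _ ≤ idealGe 𝒜 (j * m + m) := idealGe_mul_le 𝒜 _ _
      _ = idealGe 𝒜 ((j+1) * m) := by ring_nf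

end chunk2

section chunk3
variable {A : Type*} [CommRing A] (𝒜 : ℕ → AddSubgroup A) [GradedRing 𝒜]

lemma isIntegrallyClosed_idealGe [IsReduced A] {m : ℕ} (hm : 0 < m) :
    IsIntegrallyClosedIdeal (idealGe 𝒜 m) := by
  rintro z ⟨N, hN, a, ha, heq⟩
  refine mem_idealGe_of_decompose 𝒜 ?_
  intro d
  induction d using Nat.strong_induction_on with
  | _ d ih =>
  intro hdm
  have hlow : ∀ e, e < d → (DirectSum.decompose 𝒜 z e : A) = 0 :=
    fun e he => ih e he (lt_trans he hdm)
  have hzd : z ∈ idealGe 𝒜 d := mem_idealGe_of_decompose 𝒜 hlow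
  set c : A := (DirectSum.decompose 𝒜 z d : A) with hc
  have hcmem : c ∈ 𝒜 d := SetLike.coe_mem _
  have hy : z - c ∈ idealGe 𝒜 (d + 1) := by
    refine mem_idealGe_of_decompose 𝒜 (fun e he => ?_)
    rw [DirectSum.decompose_sub, DirectSum.sub_apply]
    push_cast
    rcases Nat.lt_or_ge e d with h | h
    · rw [hlow e h, DirectSum.decompose_of_mem_ne 𝒜 hcmem (by omega), sub_zero]
    · have he' : e = d := by omega
      subst he'
      rw [DirectSum.decompose_of_mem_same 𝒜 hcmem, hc, sub_self]
  -- x^i - c^i ∈ idealGe (i*d+1)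
  have pow_sub : ∀ i : ℕ, z ^ i - c ^ i ∈ idealGe 𝒜 (i * d + 1) := by
    intro i
    induction i with
    | zero => simpa using (idealGe 𝒜 (0 * d + 1)).zero_mem
    | succ i ihp =>
      have key : z ^ (i+1) - c ^ (i+1) = z ^ i * (z - c) + (z ^ i - c ^ i) * c := by ring
      rw [key]
      refine add_mem ?_ ?_
      · have h1 : z ^ i ∈ idealGe 𝒜 (i * d) :=
          (idealGe_pow_le 𝒜 d i) (Ideal.pow_mem_pow hzd i)
        have := idealGe_mul_le 𝒜 (i*d) (d+1) (Ideal.mul_mem_mul h1 hy)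
        exact idealGe_anti 𝒜 (by ring_nf; omega) this
      · have h2 : c ∈ idealGe 𝒜 d := mem_idealGe_of_mem 𝒜 le_rfl hcmem
        have := idealGe_mul_le 𝒜 (i*d+1) d (Ideal.mul_mem_mul ihp h2)
        exact idealGe_anti 𝒜 (by ring_nf; omega) this
  -- terms a j * z^(N-j)
  have hterm : ∀ j ∈ Finset.Icc 1 N, a j * z ^ (N - j) ∈ idealGe 𝒜 (N * d + 1) := by
    intro j hj
    rw [Finset.mem_Icc] at hj
    have h1 : a j ∈ idealGe 𝒜 (j * m) := (idealGe_pow_le 𝒜 m j) (ha j (Finset.mem_Icc.2 hj))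
    have h2 : z ^ (N - j) ∈ idealGe 𝒜 ((N - j) * d) :=
      (idealGe_pow_le 𝒜 d (N-j)) (Ideal.pow_mem_pow hzd (N-j))
    have h3 := idealGe_mul_le 𝒜 (j*m) ((N-j)*d) (Ideal.mul_mem_mul h1 h2)
    refine idealGe_anti 𝒜 ?_ h3
    have hjd : j * (d+1) ≤ j * m := Nat.mul_le_mul_left j hdm
    have : N * d + 1 ≤ j * (d+1) + (N - j) * d := by
      have h4 : j * (d+1) = j * d + j := by ring
      have h5 : j * d + (N - j) * d = N * d := by
        rw [← Nat.add_mul]; rw [Nat.add_sub_cancel' hj.2]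
      omega
    omega
  -- component at N*d
  have hsum : z ^ N + ∑ j ∈ Finset.Icc 1 N, a j * z ^ (N - j) ∈ idealGe 𝒜 0 := by
    rw [idealGe_top]; trivial
  have hrest : (z ^ N - c ^ N) + ∑ j ∈ Finset.Icc 1 N, a j * z ^ (N - j)
      ∈ idealGe 𝒜 (N * d + 1) :=
    add_mem (pow_sub N) (Ideal.sum_mem _ hterm)
  have hcomp : (DirectSum.decompose 𝒜 ((z ^ N - c ^ N) +
      ∑ j ∈ Finset.Icc 1 N, a j * z ^ (N - j)) (N*d) : A) = 0 :=
    decompose_eq_zero_of_mem_idealGe 𝒜 hrest (N*d) (by omega)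
  have hcN : c ^ N ∈ 𝒜 (N * d) := by
    have := SetLike.pow_mem_graded N hcmem
    rwa [smul_eq_mul] at this
  have hzero : (DirectSum.decompose 𝒜 (c ^ N +
      ((z ^ N - c ^ N) + ∑ j ∈ Finset.Icc 1 N, a j * z ^ (N - j))) (N*d) : A) = 0 := by
    have : c ^ N + ((z ^ N - c ^ N) + ∑ j ∈ Finset.Icc 1 N, a j * z ^ (N - j)) = 0 := by
      rw [← heq]; ring
    rw [this]; simp
  rw [DirectSum.decompose_add, DirectSum.add_apply] at hzero
  push_cast at hzero
  rw [hcomp, add_zero, DirectSum.decompose_of_mem_same 𝒜 hcN] at hzero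
  have : IsNilpotent c := ⟨N, hzero⟩
  have hc0 : c = 0 := this.eq_zero
  exact_mod_cast hc0

end chunk3

section comb

lemma exists_le_sum_eq {n : ℕ} (k : ℕ) :
    ∀ f : Fin n → ℕ, k ≤ ∑ i, f i → ∃ t : Fin n → ℕ, (∀ i, t i ≤ f i) ∧ ∑ i, t i = k := by
  induction k with
  | zero => exact fun f _ => ⟨0, fun i => Nat.zero_le _, by simp⟩
  | succ k ih =>
    intro f hf
    have hpos : ∃ i, 0 < f i := by
      by_contra h
      push_neg at h
      have : ∑ i, f i = 0 := Finset.sum_eq_zero (fun i _ => Nat.le_zero.1 (h i))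
      omega
    obtain ⟨i, hi⟩ := hpos
    set g : Fin n → ℕ := Function.update f i (f i - 1) with hg
    have hsplit : ∀ h : Fin n → ℕ, ∑ j, h j = h i + ∑ j ∈ Finset.univ.erase i, h j :=
      fun h => (Finset.add_sum_erase _ h (Finset.mem_univ i)).symm
    have hgsum : ∑ j, g j = (∑ j, f j) - 1 := by
      rw [hsplit g, hsplit f, hg]
      rw [Function.update_self]
      have : ∑ j ∈ Finset.univ.erase i, Function.update f i (f i - 1) j
          = ∑ j ∈ Finset.univ.erase i, f j :=
        Finset.sum_congr rfl (fun j hj =>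
          Function.update_of_ne (Finset.ne_of_mem_erase hj) _ _)
      omega
    have hk : k ≤ ∑ j, g j := by omega
    obtain ⟨t, ht, hts⟩ := ih g hk
    refine ⟨Function.update t i (t i + 1), fun j => ?_, ?_⟩
    · by_cases hji : j = i
      · subst hji
        have := ht j
        rw [Function.update_self, hg] at *
        have h2 : t j ≤ f j - 1 := by
          have := ht j; rwa [Function.update_self] at this
        omega
      · rw [Function.update_of_ne hji]
        have := ht j
        rwa [hg, Function.update_of_ne hji] at this
    · rw [hsplit (Function.update t i (t i + 1)), Function.update_self]
      have : ∑ j ∈ Finset.univ.erase i, Function.update t i (t i + 1) j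
          = ∑ j ∈ Finset.univ.erase i, t j :=
        Finset.sum_congr rfl (fun j hj =>
          Function.update_of_ne (Finset.ne_of_mem_erase hj) _ _)
      rw [this]
      rw [hsplit t] at hts
      omega

lemma split_degree {n : ℕ} (ω α : Fin n → ℕ) (hω : ∀ i, 0 < ω i) (w k q : ℕ)
    (hwpos : 0 < w) (hdvd : ∀ i, ω i ∣ w) (hq : n - 1 ≤ q * k) (hk : 0 < k)
    (hdeg : (q + 1) * k * w ≤ ∑ i, α i * ω i) :
    ∃ β : Fin n → ℕ, (∀ i, β i ≤ α i) ∧ ∑ i, β i * ω i = k * w := by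
  set u : Fin n → ℕ := fun i => w / ω i with hu
  have huw : ∀ i, u i * ω i = w := fun i => Nat.div_mul_cancel (hdvd i)
  have hupos : ∀ i, 0 < u i := fun i => by
    have := huw i; have := hω i; by_contra h; push_neg at h
    interval_cases h' : u i <;> omega
  set Q : Fin n → ℕ := fun i => α i / u i with hQ
  have hαω : ∀ i, α i * ω i = Q i * w + (α i % u i) * ω i := by
    intro i
    have h := Nat.div_add_mod (α i) (u i)
    calc α i * ω i = (u i * (α i / u i) + α i % u i) * ω i := by rw [h]
      _ = (α i / u i) * (u i * ω i) + (α i % u i) * ω i := by ring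
      _ = Q i * w + (α i % u i) * ω i := by rw [huw i]
  have hrem : ∀ i, (α i % u i) * ω i ≤ w - 1 := by
    intro i
    have h1 : α i % u i ≤ u i - 1 := by
      have := Nat.mod_lt (α i) (hupos i); omega
    calc (α i % u i) * ω i ≤ (u i - 1) * ω i := Nat.mul_le_mul_right _ h1
      _ = u i * ω i - ω i := by rw [Nat.sub_mul, one_mul]
      _ ≤ w - 1 := by have := huw i; have := hω i; omega
  have hsum : ∑ i, α i * ω i = (∑ i, Q i) * w + ∑ i, (α i % u i) * ω i := by
    rw [Finset.sum_mul]
    rw [← Finset.sum_add_distrib]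
    exact Finset.sum_congr rfl (fun i _ => hαω i)
  have hremsum : ∑ i, (α i % u i) * ω i ≤ n * (w - 1) := by
    calc ∑ i, (α i % u i) * ω i ≤ ∑ _i : Fin n, (w - 1) :=
          Finset.sum_le_sum (fun i _ => hrem i)
      _ = n * (w - 1) := by rw [Finset.sum_const, Finset.card_univ, Fintype.card_fin, smul_eq_mul]
  -- n > 0
  have hn : 0 < n := by
    rcases Nat.eq_zero_or_pos n with h | h
    · exfalso
      have : ∑ i : Fin n, α i * ω i = 0 := by
        subst h; simp
      have hpos : 0 < (q+1)*k*w := by positivity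
      omega
    · exact h
  have hQk : k ≤ ∑ i, Q i := by
    by_contra h
    push_neg at h
    have h1 : (∑ i, Q i) * w ≤ (k - 1) * w := Nat.mul_le_mul_right _ (by omega)
    have e1 : (q+1)*k*w ≤ (k-1)*w + n*(w-1) := by omega
    have e2 : n*(w-1) = n*w - n := by rw [Nat.mul_sub, mul_one]
    have e3 : (k-1)*w + n*w = (k-1+n)*w := (Nat.add_mul _ _ _).symm
    have h6 : (k-1+n) ≤ (q+1)*k := by
      have hn1 : n ≤ q*k + 1 := by omega
      have hqk : (q+1)*k = q*k + k := by ring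
      omega
    have e4 : (k-1+n)*w ≤ (q+1)*k*w := Nat.mul_le_mul_right _ h6
    have e5 : n ≤ n*w := Nat.le_mul_of_pos_right n hwpos
    omega
  obtain ⟨t, ht, hts⟩ := exists_le_sum_eq k Q hQk
  refine ⟨fun i => t i * u i, fun i => ?_, ?_⟩
  · calc t i * u i ≤ Q i * u i := Nat.mul_le_mul_right _ (ht i)
      _ ≤ α i := by rw [hQ]; exact Nat.div_mul_le_self _ _
  · calc ∑ i, t i * u i * ω i = ∑ i, t i * w := by
          exact Finset.sum_congr rfl (fun i _ => by rw [Nat.mul_assoc, huw i])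
      _ = (∑ i, t i) * w := by rw [Finset.sum_mul]
      _ = k * w := by rw [hts]

end comb

section chunk5
variable {A : Type*} [CommRing A] (𝒜 : ℕ → AddSubgroup A) [GradedRing 𝒜]
variable {n : ℕ} (x : Fin n → A) (ω : Fin n → ℕ)

lemma prod_pow_mem (hx : ∀ i, x i ∈ 𝒜 (ω i)) (α : Fin n → ℕ) (s : Finset (Fin n)) :
    (∏ i ∈ s, x i ^ α i) ∈ 𝒜 (∑ i ∈ s, α i * ω i) := by
  classical
  induction s using Finset.induction with
  | empty => simpa using SetLike.one_mem_graded 𝒜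
  | insert a s h ih =>
    rw [Finset.prod_insert h, Finset.sum_insert h]
    exact SetLike.mul_mem_graded
      (by simpa [smul_eq_mul] using SetLike.pow_mem_graded _ (hx _)) ih

lemma idealGe_mul_ge (hω : ∀ i, 0 < ω i) (hx : ∀ i, x i ∈ 𝒜 (ω i))
    (hgen : Subring.closure ((𝒜 0 : Set A) ∪ Set.range x) = ⊤)
    (k w : ℕ) (hk : 0 < k) (hwpos : 0 < w) (hdvd : ∀ i, ω i ∣ w)
    (q : ℕ) (hq : n - 1 ≤ q * k) :
    idealGe 𝒜 ((q+1) * k * w) ≤ idealGe 𝒜 (k * w) * idealGe 𝒜 (q * k * w) := by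
  classical
  set J : Ideal A := idealGe 𝒜 (k * w) * idealGe 𝒜 (q * k * w) with hJ
  set S : ℕ → Set A := fun ℓ =>
    {a | ∃ c ∈ (𝒜 0 : Set A), ∃ α : Fin n → ℕ,
      a = c * ∏ i, x i ^ α i ∧ ∑ i, α i * ω i = ℓ} with hSdef
  set M : ℕ → Submodule ℤ A := fun ℓ => Submodule.span ℤ (S ℓ) with hMdef
  have hSmul : ∀ i j, S i * S j ⊆ S (i + j) := by
    rintro i j z hz
    obtain ⟨a, ⟨c, hc, α, rfl, hα⟩, b, ⟨c', hc', α', rfl, hα'⟩, rfl⟩ := hz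
    refine ⟨c * c', by simpa using SetLike.mul_mem_graded hc hc', α + α', ?_, ?_⟩
    · have : ∏ i, x i ^ (α + α') i = (∏ i, x i ^ α i) * ∏ i, x i ^ α' i := by
        rw [← Finset.prod_mul_distrib]
        exact Finset.prod_congr rfl (fun i _ => by simp [pow_add])
      rw [this]; ring
    · rw [← hα, ← hα', ← Finset.sum_add_distrib]
      exact Finset.sum_congr rfl (fun i _ => by simp [Pi.add_apply, Nat.add_mul])
  have hMmul : ∀ i j, M i * M j ≤ M (i + j) := by
    intro i j
    rw [hMdef]
    rw [Submodule.span_mul_span]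
    exact Submodule.span_mono (hSmul i j)
  have hQ : ∀ z, ∀ ℓ, (DirectSum.decompose 𝒜 z ℓ : A) ∈ M ℓ := by
    intro z
    have hz : z ∈ Subring.closure ((𝒜 0 : Set A) ∪ Set.range x) := by
      rw [hgen]; trivial
    refine Subring.closure_induction ?_ ?_ ?_ ?_ ?_ ?_ hz
    · rintro z (hz0 | ⟨i, rfl⟩) ℓ
      · by_cases hℓ : ℓ = 0
        · subst hℓ
          rw [DirectSum.decompose_of_mem_same 𝒜 hz0]
          exact Submodule.subset_span ⟨z, hz0, 0, by simp, by simp⟩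
        · rw [DirectSum.decompose_of_mem_ne 𝒜 hz0 (Ne.symm hℓ)]
          exact zero_mem _
      · by_cases hℓ : ℓ = ω i
        · subst hℓ
          rw [DirectSum.decompose_of_mem_same 𝒜 (hx i)]
          refine Submodule.subset_span ⟨1, SetLike.one_mem_graded 𝒜, Pi.single i 1, ?_, ?_⟩
          · rw [one_mul]
            rw [Finset.prod_eq_single i (fun j _ hj => by
              rw [Pi.single_eq_of_ne hj, pow_zero]) (fun h => absurd (Finset.mem_univ i) h)]
            rw [Pi.single_eq_same, pow_one]
          · rw [Finset.sum_eq_single i (fun j _ hj => by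
              rw [Pi.single_eq_of_ne hj, zero_mul]) (fun h => absurd (Finset.mem_univ i) h)]
            rw [Pi.single_eq_same, one_mul]
        · rw [DirectSum.decompose_of_mem_ne 𝒜 (hx i) (fun h => hℓ h.symm)]
          exact zero_mem _
    · intro ℓ; simp only [DirectSum.decompose_zero, DirectSum.zero_apply,
        ZeroMemClass.coe_zero]; exact zero_mem _
    · intro ℓ
      by_cases hℓ : ℓ = 0
      · subst hℓ
        rw [DirectSum.decompose_of_mem_same 𝒜 (SetLike.one_mem_graded 𝒜)]
        exact Submodule.subset_span ⟨1, SetLike.one_mem_graded 𝒜, 0, by simp, by simp⟩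
      · rw [DirectSum.decompose_of_mem_ne 𝒜 (SetLike.one_mem_graded 𝒜) (Ne.symm hℓ)]
        exact zero_mem _
    · intro a b _ _ ha hb ℓ
      rw [DirectSum.decompose_add, DirectSum.add_apply]
      push_cast
      exact add_mem (ha ℓ) (hb ℓ)
    · intro a _ ha ℓ
      rw [DirectSum.decompose_neg]
      have hcoe : ((-(DirectSum.decompose 𝒜 a)) ℓ : A) = -((DirectSum.decompose 𝒜 a) ℓ : A) := by
        rw [DFinsupp.neg_apply]; push_cast; rfl
      rw [hcoe]
      exact neg_mem (ha ℓ)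
    · intro a b _ _ ha hb ℓ
      rw [DirectSum.decompose_mul, DirectSum.coe_mul_apply]
      refine Submodule.sum_mem _ ?_
      rintro ⟨i, j⟩ hij
      simp only [Finset.mem_filter] at hij
      have hmem : (DirectSum.decompose 𝒜 a i : A) * (DirectSum.decompose 𝒜 b j : A)
          ∈ M (i + j) := hMmul i j (Submodule.mul_mem_mul (ha i) (hb j))
      rw [hij.2] at hmem
      exact hmem
  -- now conclude
  rw [idealGe, Ideal.span_le]
  rintro z ⟨ℓ, hℓ, hz⟩
  have hzM : z ∈ M ℓ := by
    have := hQ z ℓ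
    rwa [DirectSum.decompose_of_mem_same 𝒜 hz] at this
  have hSJ : S ℓ ⊆ (J : Set A) := by
    rintro _ ⟨c, hc, α, rfl, hα⟩
    obtain ⟨β, hβ, hβs⟩ := split_degree ω α hω w k q hwpos hdvd hq hk (hα ▸ hℓ)
    have hαβ : ∀ i, α i = β i + (α i - β i) := fun i => (Nat.add_sub_cancel' (hβ i)).symm
    have hprodsplit : ∏ i, x i ^ α i = (∏ i, x i ^ β i) * ∏ i, x i ^ (α i - β i) := by
      rw [← Finset.prod_mul_distrib]
      exact Finset.prod_congr rfl (fun i _ => by rw [← pow_add, ← hαβ i])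
    have hsumsplit : ∑ i, α i * ω i = ∑ i, β i * ω i + ∑ i, (α i - β i) * ω i := by
      rw [← Finset.sum_add_distrib]
      exact Finset.sum_congr rfl (fun i _ => by rw [← Nat.add_mul, ← hαβ i])
    have hd2 : q * k * w ≤ ∑ i, (α i - β i) * ω i := by
      have hqq : (q+1) * k * w = q*k*w + k*w := by ring
      omega
    have m1 : (∏ i, x i ^ β i) ∈ idealGe 𝒜 (k * w) := by
      refine mem_idealGe_of_mem 𝒜 (le_of_eq hβs.symm) ?_
      exact prod_pow_mem 𝒜 x ω hx β Finset.univ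
    have m2 : c * ∏ i, x i ^ (α i - β i) ∈ idealGe 𝒜 (q * k * w) := by
      refine mem_idealGe_of_mem 𝒜 hd2 ?_
      have := SetLike.mul_mem_graded hc (prod_pow_mem 𝒜 x ω hx (fun i => α i - β i) Finset.univ)
      simpa using this
    have key : c * ∏ i, x i ^ α i
        = (∏ i, x i ^ β i) * (c * ∏ i, x i ^ (α i - β i)) := by
      rw [hprodsplit]; ring
    rw [key]
    exact Ideal.mul_mem_mul m1 m2
  have hle : M ℓ ≤ J.restrictScalars ℤ := Submodule.span_le.mpr hSJ
  exact hle hzM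

end chunk5

theorem stmt6 {A : Type*} [CommRing A] [IsReduced A] (𝒜 : ℕ → AddSubgroup A) [GradedRing 𝒜]
    {n : ℕ} (x : Fin n → A) (ω : Fin n → ℕ) (hω : ∀ i, 0 < ω i)
    (hx : ∀ i, x i ∈ 𝒜 (ω i))
    (hgen : Subring.closure ((𝒜 0 : Set A) ∪ Set.range x) = ⊤)
    (k : ℕ) (hk : 0 < k) (w : ℕ) (hw : w = Finset.univ.lcm ω)
    (I : Ideal A) (hI : I = idealGe 𝒜 (k * w)) :
    ((∀ p : ℕ, 1 ≤ p → (p : ℚ) ≤ ((n : ℚ) - 2) / (k : ℚ) + 1 →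
        I ^ p = idealGe 𝒜 (p * k * w)) →
      IsNormalIdeal I) ∧
    (n - 1 ≤ k → IsNormalIdeal I) := by
  have hdvd : ∀ i, ω i ∣ w := fun i => hw ▸ Finset.dvd_lcm (Finset.mem_univ i)
  have hwpos : 0 < w := by
    rcases Nat.eq_zero_or_pos w with h | h
    · exfalso
      have h0 : Finset.univ.lcm ω = 0 := by rw [← hw, h]
      obtain ⟨i, _, hi⟩ := Finset.lcm_eq_zero_iff.mp h0
      have := hω i
      omega
    · exact h
  have main : (∀ p : ℕ, 1 ≤ p → (p : ℚ) ≤ ((n : ℚ) - 2) / (k : ℚ) + 1 →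
      I ^ p = idealGe 𝒜 (p * k * w)) → IsNormalIdeal I := by
    intro H
    have step1 : ∀ p, 1 ≤ p → I ^ p = idealGe 𝒜 (p * k * w) := by
      intro p
      induction p with
      | zero => omega
      | succ p ih =>
        intro _
        rcases Nat.eq_zero_or_pos p with hp0 | hp0
        · subst hp0
          simpa [pow_one, one_mul] using hI
        · have ihp := ih hp0
          by_cases hcase : p * k ≤ n - 2
          · have hn2 : 2 ≤ n := by
              have : 1 ≤ p * k := Nat.mul_pos hp0 hk
              omega
            refine H (p+1) (by omega) ?_
            have hk' : (0:ℚ) < k := by exact_mod_cast hk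
            have hcast : (p:ℚ) * k ≤ (n:ℚ) - 2 := by
              have h1 : ((p * k : ℕ) : ℚ) ≤ ((n - 2 : ℕ) : ℚ) := by exact_mod_cast hcase
              rw [Nat.cast_mul, Nat.cast_sub hn2] at h1
              exact h1
            have h2 : (p:ℚ) ≤ ((n:ℚ) - 2) / k := (le_div_iff₀ hk').mpr hcast
            push_cast
            linarith
          · have hq : n - 1 ≤ p * k := by omega
            apply le_antisymm
            · rw [pow_succ, ihp, hI]
              have h1 := idealGe_mul_le 𝒜 (p*k*w) (k*w)
              have h2 : idealGe 𝒜 (p*k*w + k*w) = idealGe 𝒜 ((p+1)*k*w) := by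
                rw [show p*k*w + k*w = (p+1)*k*w by ring]
              rw [← h2]
              exact h1
            · have hA := idealGe_mul_ge 𝒜 x ω hω hx hgen k w hk hwpos hdvd p hq
              rw [pow_succ, ihp, hI]
              exact hA.trans (le_of_eq (mul_comm _ _))
    intro m hm xx hxx
    rw [step1 m (by omega)]
    have hpos : 0 < m * k * w := by positivity
    apply isIntegrallyClosed_idealGe 𝒜 hpos
    rwa [step1 m (by omega)] at hxx
  refine ⟨main, ?_⟩
  intro hnk
  apply main
  intro p hp hpq
  have hp1 : p = 1 := by
    by_contra hne
    have hp2 : 2 ≤ p := by omega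
    have hk' : (0:ℚ) < k := by exact_mod_cast hk
    have hge2 : (2:ℚ) ≤ ((n:ℚ) - 2) / k + 1 := le_trans (by exact_mod_cast hp2) hpq
    have h1 : (1:ℚ) ≤ ((n:ℚ) - 2) / k := by linarith
    have h2 : (k:ℚ) ≤ (n:ℚ) - 2 := by
      rw [le_div_iff₀ hk'] at h1
      linarith
    have h3 : (k:ℚ) + 2 ≤ n := by linarith
    have h4 : k + 2 ≤ n := by exact_mod_cast h3
    omega
  subst hp1
  simpa [pow_one, one_mul] using hI
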